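/- On the board of size 2 × 2 × ⋯ × 2 × m (with k-1 coordinates equal to 2 and last coordinate m ≥ 2, k ≥ 3), the square (1,1,...,1) is not reachable by any sequence of knight moves from the square (2,2,...,2); in particular the knight graph on this board is disconnected and has no Hamiltonian cycle. -/

import Mathlib

/-- A knight move in `k` dimensions: coordinates differ in exactly two places,
one by `±1` and one by `±2`. -/
def knightMove {k : ℕ} (a b : Fin k → ℤ) : Prop :=
  ∃ i j : Fin k, i ≠ j ∧ |a i - b i| = 1 ∧ |a j - b j| = 2 ∧
    ∀ l, l ≠ i → l ≠ j → a l = b l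

/-- Membership in the board `∏ [1, n i]`. -/
def onBoard {k : ℕ} (n : Fin k → ℕ) (a : Fin k → ℤ) : Prop :=
  ∀ i, 1 ≤ a i ∧ a i ≤ (n i : ℤ)

/-- The knight graph on the board `∏ [1, n i]`. -/
def knightGraph {k : ℕ} (n : Fin k → ℕ) :
    SimpleGraph {a : Fin k → ℤ // onBoard n a} where
  Adj x y := knightMove x.1 y.1
  symm := by
    constructor
    rintro x y ⟨i, j, hij, h1, h2, h3⟩
    exact ⟨i, j, hij, by rwa [abs_sub_comm], by rwa [abs_sub_comm],
      fun l hli hlj => (h3 l hli hlj).symm⟩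
  loopless := by
    constructor
    rintro x ⟨i, j, hij, h1, h2, h3⟩
    simp at h1

/-- Existence of a closed knight's tour (Hamiltonian cycle of the knight graph). -/
def HasClosedTour {k : ℕ} (n : Fin k → ℕ) : Prop :=
  ∃ (x : {a : Fin k → ℤ // onBoard n a}) (w : (knightGraph n).Walk x x),
    w.IsHamiltonianCycle

/-- On a `2 × 2 × ⋯ × 2 × m` board, `(1,…,1)` is unreachable from `(2,…,2)`;
in particular the knight graph is disconnected and has no Hamiltonian cycle. -/
theorem two_dot_dot_two_m_disconnected {k : ℕ} (hk : 3 ≤ k) (n : Fin k → ℕ)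
    (m : ℕ) (hm : 2 ≤ m)
    (hn : ∀ i : Fin k, (i : ℕ) < k - 1 → n i = 2)
    (hlast : n ⟨k - 1, by omega⟩ = m)
    (h2 : onBoard n (fun _ => 2)) (h1 : onBoard n (fun _ => 1)) :
    ¬ (knightGraph n).Reachable ⟨fun _ => 2, h2⟩ ⟨fun _ => 1, h1⟩ ∧
      ¬ (knightGraph n).Connected ∧ ¬ HasClosedTour n := by
  -- Invariant: parity of the last coordinate is preserved by every knight move,
  -- since a `±2` change is only possible in the last coordinate.
  set last : Fin k := ⟨k - 1, by omega⟩ with hlastdef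
  have key : ∀ x y : {a : Fin k → ℤ // onBoard n a}, (knightGraph n).Adj x y →
      (x.1 last) % 2 = (y.1 last) % 2 := by
    rintro x y ⟨i, j, hij, hd1, hd2, hrest⟩
    have hj : j = last := by
      by_contra hne
      have hjlt : (j : ℕ) < k - 1 := by
        have := j.2
        have : (j : ℕ) ≠ k - 1 := fun h => hne (Fin.ext h)
        omega
      have hnj := hn j hjlt
      have hx := x.2 j
      have hy := y.2 j
      rw [hnj] at hx hy
      have : |x.1 j - y.1 j| ≤ 1 := by
        rw [abs_le]; push_cast at hx hy ⊢; omega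
      omega
    subst hj
    have hi : i ≠ last := hij
    have h2' : x.1 last - y.1 last = 2 ∨ x.1 last - y.1 last = -2 := by
      rcases abs_eq (by norm_num : (0:ℤ) ≤ 2) |>.mp hd2 with h | h
      · exact Or.inl h
      · exact Or.inr h
    omega
  have hwalk : ∀ (x y : {a : Fin k → ℤ // onBoard n a}),
      (knightGraph n).Walk x y → (x.1 last) % 2 = (y.1 last) % 2 := by
    intro x y w
    induction w with
    | nil => rfl
    | cons h p ih => exact (key _ _ h).trans ih
  have hnr : ¬ (knightGraph n).Reachable ⟨fun _ => 2, h2⟩ ⟨fun _ => 1, h1⟩ := by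
    intro hr
    obtain ⟨w⟩ := hr
    have := hwalk _ _ w
    norm_num at this
  refine ⟨hnr, fun hc => hnr (hc.preconnected _ _), ?_⟩
  rintro ⟨x, w, hw⟩
  apply hnr
  have ha : (⟨fun _ => 2, h2⟩ : {a : Fin k → ℤ // onBoard n a}) ∈ w.support :=
    hw.mem_support _
  have hb : (⟨fun _ => 1, h1⟩ : {a : Fin k → ℤ // onBoard n a}) ∈ w.support :=
    hw.mem_support _
  exact ((w.takeUntil _ ha).reachable.symm).trans (w.takeUntil _ hb).reachable
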